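/- Let A, B be symmetric linear maps on ℝⁿ, let I ⊆ ℝ be a nonempty open interval, E : I → L(ℝ^(n-m), ℝⁿ) a differentiable map with E(t) injective for every t ∈ I, and μ : I → ℝ a differentiable function such that E(t)ᵀ B E(t) = μ(t) · E(t)ᵀ A E(t) for all t ∈ I. If rank(A) > 4m, then μ is constant. -/

import Mathlib

open Matrix
open Module

lemma rank_le_of_isotropic {n : ℕ} (A : Matrix (Fin n) (Fin n) ℝ)
    (U : Submodule ℝ (Fin n → ℝ))
    (hU : ∀ u ∈ U, ∀ v ∈ U, u ⬝ᵥ A.mulVec v = 0) :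
    A.rank ≤ 2 * (n - Module.finrank ℝ U) := by
  classical
  set e : (Fin n → ℝ) ≃ₗ[ℝ] EuclideanSpace ℝ (Fin n) :=
    (WithLp.linearEquiv 2 ℝ (Fin n → ℝ)).symm with he
  have hinner : ∀ u v : Fin n → ℝ, (inner ℝ (e u) (e v) : ℝ) = u ⬝ᵥ v := by
    intro u v
    simp [he, PiLp.inner_apply, RCLike.inner_apply, dotProduct, mul_comm]
  -- A(U) lands in orthogonal complement
  have hmapU : (U.map A.mulVecLin).map e.toLinearMap ≤ (U.map e.toLinearMap)ᗮ := by
    rintro - ⟨-, ⟨v, hv, rfl⟩, rfl⟩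
    intro w hw
    rw [Submodule.mem_map] at hw
    obtain ⟨u, hu, rfl⟩ := hw
    exact (hinner u (A.mulVecLin v)).trans (by simpa using hU u hu v hv)
  have hdimE : finrank ℝ (EuclideanSpace ℝ (Fin n)) = n := by simp
  have horth : finrank ℝ (U.map e.toLinearMap) + finrank ℝ (U.map e.toLinearMap)ᗮ = n := by
    rw [Submodule.finrank_add_finrank_orthogonal, hdimE]
  have hUU : finrank ℝ (U.map e.toLinearMap) = finrank ℝ U := LinearEquiv.finrank_map_eq e U
  have h1 : finrank ℝ (U.map A.mulVecLin) ≤ n - finrank ℝ U := by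
    have := Submodule.finrank_mono hmapU
    rw [LinearEquiv.finrank_map_eq e] at this
    omega
  obtain ⟨W, hW⟩ := Submodule.exists_isCompl U
  have hdimP : finrank ℝ (Fin n → ℝ) = n := by simp
  have hWU : finrank ℝ U + finrank ℝ W = n := by
    have := Submodule.finrank_add_eq_of_isCompl (V := Fin n → ℝ) hW; omega
  have h2 : finrank ℝ (W.map A.mulVecLin) ≤ n - finrank ℝ U := by
    have := Submodule.finrank_map_le A.mulVecLin W
    omega
  have hrange : LinearMap.range A.mulVecLin = U.map A.mulVecLin ⊔ W.map A.mulVecLin := by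
    rw [LinearMap.range_eq_map, ← hW.sup_eq_top, Submodule.map_sup]
  have hsup := Submodule.finrank_sup_add_finrank_inf_eq (U.map A.mulVecLin) (W.map A.mulVecLin)
  have : A.rank ≤ finrank ℝ (U.map A.mulVecLin) + finrank ℝ (W.map A.mulVecLin) := by
    rw [Matrix.rank, hrange]; omega
  omega

lemma rank_le_four_m {n m : ℕ} (A C : Matrix (Fin n) (Fin n) ℝ)
    (Em : Matrix (Fin n) (Fin (n - m)) ℝ) (hinj : Function.Injective Em.mulVec)
    (hiso : ∀ x ∈ LinearMap.ker (C * Em).mulVecLin, ∀ y ∈ LinearMap.ker (C * Em).mulVecLin,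
       (Em *ᵥ x) ⬝ᵥ A *ᵥ (Em *ᵥ y) = 0)
    (hCE : Emᵀ * (C * Em) = 0) :
    A.rank ≤ 4 * m := by
  classical
  set K := LinearMap.ker (C * Em).mulVecLin with hK
  set U := K.map Em.mulVecLin with hUdef
  have hU : ∀ u ∈ U, ∀ v ∈ U, u ⬝ᵥ A.mulVec v = 0 := by
    rintro - ⟨x, hx, rfl⟩ - ⟨y, hy, rfl⟩
    exact hiso x hx y hy
  have hinj' : Function.Injective Em.mulVecLin := hinj
  have hUK : finrank ℝ U = finrank ℝ K :=
    (LinearEquiv.finrank_eq (Submodule.equivMapOfInjective Em.mulVecLin hinj' K)).symm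
  have hdom : finrank ℝ (Fin (n - m) → ℝ) = n - m := by simp
  have hdT : finrank ℝ (Fin n → ℝ) = n := by simp
  -- rank Em = n - m
  have hkerEm : LinearMap.ker Em.mulVecLin = ⊥ := LinearMap.ker_eq_bot.2 hinj'
  have hrnEm : Em.rank + finrank ℝ (LinearMap.ker Em.mulVecLin) = finrank ℝ (Fin (n - m) → ℝ) :=
    LinearMap.finrank_range_add_finrank_ker Em.mulVecLin
  have hker0 : finrank ℝ (LinearMap.ker Em.mulVecLin) = 0 := by rw [hkerEm]; exact finrank_bot ℝ _
  have hrankEm : Em.rank = n - m := by omega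
  -- rank (C*Em) ≤ m
  have hsub : LinearMap.range (C * Em).mulVecLin ≤ LinearMap.ker Emᵀ.mulVecLin := by
    rintro - ⟨x, rfl⟩
    have : (Emᵀ * (C * Em)).mulVecLin x = 0 := by rw [hCE]; simp
    rwa [Matrix.mulVecLin_mul] at this
  have hrnT : Emᵀ.rank + finrank ℝ (LinearMap.ker Emᵀ.mulVecLin) = finrank ℝ (Fin n → ℝ) :=
    LinearMap.finrank_range_add_finrank_ker Emᵀ.mulVecLin
  have hrkT : Emᵀ.rank = n - m := by rw [Matrix.rank_transpose, hrankEm]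
  have hrkCE : finrank ℝ (LinearMap.range (C * Em).mulVecLin)
      ≤ finrank ℝ (LinearMap.ker Emᵀ.mulVecLin) := Submodule.finrank_mono hsub
  have hrnCE : finrank ℝ (LinearMap.range (C * Em).mulVecLin) + finrank ℝ K
      = finrank ℝ (Fin (n - m) → ℝ) := LinearMap.finrank_range_add_finrank_ker (C * Em).mulVecLin
  have hmain : A.rank ≤ 2 * (n - finrank ℝ U) := rank_le_of_isotropic A U hU
  omega

lemma quad_rewrite {n p : ℕ} (M : Matrix (Fin n) (Fin n) ℝ)
    (Em : Matrix (Fin n) (Fin p) ℝ) (x y : Fin p → ℝ) :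
    x ⬝ᵥ (Emᵀ * M * Em) *ᵥ y = (Em *ᵥ x) ⬝ᵥ M *ᵥ (Em *ᵥ y) := by
  rw [Matrix.mul_assoc, ← Matrix.mulVec_mulVec, Matrix.dotProduct_mulVec,
    Matrix.vecMul_transpose, ← Matrix.mulVec_mulVec]

lemma hasDerivAt_form {n p : ℕ} (M : Matrix (Fin n) (Fin n) ℝ)
    (E : ℝ → Matrix (Fin n) (Fin p) ℝ) (E' : Matrix (Fin n) (Fin p) ℝ) (t₀ : ℝ)
    (hEd : ∀ i j, HasDerivAt (fun t => E t i j) (E' i j) t₀)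
    (x y : Fin p → ℝ) :
    HasDerivAt (fun t => (E t *ᵥ x) ⬝ᵥ M *ᵥ (E t *ᵥ y))
      ((E' *ᵥ x) ⬝ᵥ M *ᵥ (E t₀ *ᵥ y) + (E t₀ *ᵥ x) ⬝ᵥ M *ᵥ (E' *ᵥ y)) t₀ := by
  have hu : ∀ i, HasDerivAt (fun t => (E t *ᵥ x) i) ((E' *ᵥ x) i) t₀ := by
    intro i
    simpa [Matrix.mulVec, dotProduct] using
      HasDerivAt.fun_sum (fun j (_ : j ∈ Finset.univ) => (hEd i j).mul_const (x j))
  have hv : ∀ k, HasDerivAt (fun t => (E t *ᵥ y) k) ((E' *ᵥ y) k) t₀ := by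
    intro k
    simpa [Matrix.mulVec, dotProduct] using
      HasDerivAt.fun_sum (fun j (_ : j ∈ Finset.univ) => (hEd k j).mul_const (y j))
  have hw : ∀ i, HasDerivAt (fun t => (M *ᵥ (E t *ᵥ y)) i) ((M *ᵥ (E' *ᵥ y)) i) t₀ := by
    intro i
    simpa [Matrix.mulVec, dotProduct] using
      HasDerivAt.fun_sum (fun k (_ : k ∈ Finset.univ) => (hv k).const_mul (M i k))
  have := HasDerivAt.fun_sum (fun i (_ : i ∈ Finset.univ) => (hu i).mul (hw i))
  simpa [dotProduct, Finset.sum_add_distrib] using this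

theorem mu_constant_of_high_rank {n m : ℕ}
    (A B : Matrix (Fin n) (Fin n) ℝ) (hA : A.IsSymm) (hB : B.IsSymm)
    (a b : ℝ) (hab : a < b)
    (E : ℝ → Matrix (Fin n) (Fin (n - m)) ℝ) (μ : ℝ → ℝ)
    (hE : ∀ i j, DifferentiableOn ℝ (fun t => E t i j) (Set.Ioo a b))
    (hμ : DifferentiableOn ℝ μ (Set.Ioo a b))
    (hinj : ∀ t ∈ Set.Ioo a b, Function.Injective (E t).mulVec)
    (heq : ∀ t ∈ Set.Ioo a b, (E t)ᵀ * B * E t = μ t • ((E t)ᵀ * A * E t))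
    (hrank : 4 * m < A.rank) :
    ∀ s ∈ Set.Ioo a b, ∀ t ∈ Set.Ioo a b, μ s = μ t := by
  have hder : ∀ t₀ ∈ Set.Ioo a b, deriv μ t₀ = 0 := by
    intro t₀ ht₀
    by_contra hne
    set μ' := deriv μ t₀ with hμ'
    set Em := E t₀ with hEm
    set C := B - μ t₀ • A with hC
    -- C is symmetric
    have hCsymm : Cᵀ = C := by
      rw [hC, Matrix.transpose_sub, Matrix.transpose_smul, hA.eq, hB.eq]
    -- Eᵀ C E = 0
    have hCE : Emᵀ * (C * Em) = 0 := by
      rw [hEm, hC, Matrix.sub_mul, Matrix.mul_sub, Matrix.smul_mul, Matrix.mul_smul,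
        ← Matrix.mul_assoc, ← Matrix.mul_assoc, heq t₀ ht₀, sub_self]
    -- derivative matrix of E at t₀
    set E' : Matrix (Fin n) (Fin (n - m)) ℝ := fun i j => deriv (fun t => E t i j) t₀ with hE'
    have hEd : ∀ i j, HasDerivAt (fun t => E t i j) (E' i j) t₀ := fun i j =>
      ((hE i j).differentiableAt (isOpen_Ioo.mem_nhds ht₀)).hasDerivAt
    have hμd : HasDerivAt μ μ' t₀ := (hμ.differentiableAt (isOpen_Ioo.mem_nhds ht₀)).hasDerivAt
    -- the isotropy condition
    have hiso : ∀ x ∈ LinearMap.ker (C * Em).mulVecLin, ∀ y ∈ LinearMap.ker (C * Em).mulVecLin,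
        (Em *ᵥ x) ⬝ᵥ A *ᵥ (Em *ᵥ y) = 0 := by
      intro x hx y hy
      have hx0 : (C * Em) *ᵥ x = 0 := hx
      have hy0 : (C * Em) *ᵥ y = 0 := hy
      have hg := hasDerivAt_form A E E' t₀ hEd x y
      have hh := hasDerivAt_form B E E' t₀ hEd x y
      -- h = μ * g near t₀
      have hev : (fun t => (E t *ᵥ x) ⬝ᵥ B *ᵥ (E t *ᵥ y))
          =ᶠ[nhds t₀] fun t => μ t * ((E t *ᵥ x) ⬝ᵥ A *ᵥ (E t *ᵥ y)) := by
        filter_upwards [isOpen_Ioo.mem_nhds ht₀] with t ht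
        rw [← quad_rewrite B (E t) x y, ← quad_rewrite A (E t) x y, heq t ht,
          Matrix.smul_mulVec, dotProduct_smul, smul_eq_mul]
      have hh' : HasDerivAt (fun t => (E t *ᵥ x) ⬝ᵥ B *ᵥ (E t *ᵥ y))
          (μ' * ((Em *ᵥ x) ⬝ᵥ A *ᵥ (Em *ᵥ y)) + μ t₀ *
            ((E' *ᵥ x) ⬝ᵥ A *ᵥ (Em *ᵥ y) + (Em *ᵥ x) ⬝ᵥ A *ᵥ (E' *ᵥ y))) t₀ :=
        (hμd.mul hg).congr_of_eventuallyEq hev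
      have huniq := hh.unique hh'
      -- compute: LHS - μ t₀ * (...) = 0 using C-kernel conditions
      have hterm1 : (E' *ᵥ x) ⬝ᵥ B *ᵥ (Em *ᵥ y) - μ t₀ * ((E' *ᵥ x) ⬝ᵥ A *ᵥ (Em *ᵥ y)) = 0 := by
        have : (E' *ᵥ x) ⬝ᵥ C *ᵥ (Em *ᵥ y) = 0 := by
          rw [Matrix.mulVec_mulVec, hy0, dotProduct_zero]
        rw [hC, Matrix.sub_mulVec, Matrix.smul_mulVec, dotProduct_sub,
          dotProduct_smul, smul_eq_mul] at this
        linarith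
      have hterm2 : (Em *ᵥ x) ⬝ᵥ B *ᵥ (E' *ᵥ y) - μ t₀ * ((Em *ᵥ x) ⬝ᵥ A *ᵥ (E' *ᵥ y)) = 0 := by
        have : (Em *ᵥ x) ⬝ᵥ C *ᵥ (E' *ᵥ y) = 0 := by
          rw [Matrix.dotProduct_mulVec, ← Matrix.mulVec_transpose, hCsymm,
            Matrix.mulVec_mulVec, hx0, zero_dotProduct]
        rw [hC, Matrix.sub_mulVec, Matrix.smul_mulVec, dotProduct_sub,
          dotProduct_smul, smul_eq_mul] at this
        linarith
      have : μ' * ((Em *ᵥ x) ⬝ᵥ A *ᵥ (Em *ᵥ y)) = 0 := by linarith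
      exact (mul_eq_zero.1 this).resolve_left hne
    have := rank_le_four_m A C Em (hinj t₀ ht₀) hiso hCE
    omega
  -- conclude μ is constant on the interval
  intro s hs t ht
  have hbound : ∀ x ∈ Set.Ioo a b, ‖fderivWithin ℝ μ (Set.Ioo a b) x‖ ≤ 0 := by
    intro x hx
    have h1 : fderivWithin ℝ μ (Set.Ioo a b) x = fderiv ℝ μ x :=
      fderivWithin_of_isOpen isOpen_Ioo hx
    have h2 : fderiv ℝ μ x = 0 := by
      apply ContinuousLinearMap.ext_ring
      have hd : deriv μ x = 0 := hder x hx
      simpa using hd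
    rw [h1, h2]
    simp
  have := (convex_Ioo a b).norm_image_sub_le_of_norm_fderivWithin_le hμ hbound ht hs
  simp only [zero_mul] at this
  have : ‖μ s - μ t‖ ≤ 0 := this
  have := norm_nonneg (μ s - μ t)
  have h0 : ‖μ s - μ t‖ = 0 := le_antisymm ‹‖μ s - μ t‖ ≤ 0› this
  have := norm_eq_zero.1 h0
  linarith [sub_eq_zero.1 this]
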